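/- Let G be a real p×q matrix. There exists a matrix F ∈ ℝ^{q×p} such that the spectral radius of I_q − F·G is strictly less than 1 if and only if G has full column rank (rank G = q). -/

import Mathlib

open Matrix

/-- Spectral radius of a real square matrix: the spectral radius of its
complexification, i.e. the sup of the norms of its complex eigenvalues. -/
noncomputable def specRad {n : ℕ} (A : Matrix (Fin n) (Fin n) ℝ) : ENNReal :=
  spectralRadius ℂ (A.map (algebraMap ℝ ℂ))

lemma isUnit_of_rank_eq_card {q : ℕ} (A : Matrix (Fin q) (Fin q) ℝ)
    (h : A.rank = q) : IsUnit A := by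
  rw [← Matrix.mulVec_surjective_iff_isUnit]
  have htop : LinearMap.range A.mulVecLin = ⊤ := by
    apply Submodule.eq_top_of_finrank_eq
    rw [← Matrix.rank, h, Module.finrank_fintype_fun_eq_card, Fintype.card_fin]
  intro v
  have hv : v ∈ LinearMap.range A.mulVecLin := htop ▸ Submodule.mem_top
  obtain ⟨y, hy⟩ := hv
  exact ⟨y, by simpa [Matrix.mulVecLin_apply] using hy⟩

/-- There exists `F` with `ρ(I_q − F·G) < 1` iff `G` has full column rank. -/
theorem stmt0 {p q : ℕ} (G : Matrix (Fin p) (Fin q) ℝ) :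
    (∃ F : Matrix (Fin q) (Fin p) ℝ, specRad (1 - F * G) < 1) ↔ G.rank = q := by
  constructor
  · rintro ⟨F, hF⟩
    set φ := (algebraMap ℝ ℂ).mapMatrix (m := Fin q) with hφ
    have hmem : (1 : ℂ) ∉ spectrum ℂ ((1 - F * G).map (algebraMap ℝ ℂ)) := by
      intro hmem
      have hle : (1 : ENNReal) ≤ specRad (1 - F * G) := by
        have := le_iSup₂ (f := fun k (_ : k ∈ spectrum ℂ ((1 - F * G).map (algebraMap ℝ ℂ))) =>
          (‖k‖₊ : ENNReal)) (1 : ℂ) hmem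
        simpa [specRad, spectralRadius] using this
      exact absurd hF (not_lt.mpr hle)
    have hunit : IsUnit ((F * G).map (algebraMap ℝ ℂ)) := by
      have h0 := spectrum.notMem_iff.mp hmem
      have h1 : algebraMap ℂ (Matrix (Fin q) (Fin q) ℂ) 1 - (1 - F * G).map (algebraMap ℝ ℂ)
          = (F * G).map (algebraMap ℝ ℂ) := by
        have h2 : (1 - F * G).map (algebraMap ℝ ℂ) = φ (1 - F * G) := rfl
        have h3 : (F * G).map (algebraMap ℝ ℂ) = φ (F * G) := rfl
        rw [h2, h3, map_one (algebraMap ℂ (Matrix (Fin q) (Fin q) ℂ)),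
          map_sub φ, map_one φ, sub_sub_cancel]
      rwa [h1] at h0
    have hdetC : IsUnit (algebraMap ℝ ℂ (F * G).det) := by
      have := (Matrix.isUnit_iff_isUnit_det _).mp hunit
      rw [RingHom.map_det]
      exact this
    have hdet : IsUnit (F * G).det := by
      rw [isUnit_iff_ne_zero] at hdetC ⊢
      exact fun h0 => hdetC (by simp [h0])
    have hFG : IsUnit (F * G) := (Matrix.isUnit_iff_isUnit_det _).mpr hdet
    have h1 : (F * G).rank = q := by
      simpa using Matrix.rank_of_isUnit _ hFG
    exact le_antisymm (Matrix.rank_le_width G)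
      (by calc q = (F * G).rank := h1.symm
            _ ≤ G.rank := Matrix.rank_mul_le_right F G)
  · intro h
    have hU : IsUnit (Gᵀ * G) := by
      apply isUnit_of_rank_eq_card
      rw [Matrix.rank_transpose_mul_self, h]
    refine ⟨(Gᵀ * G)⁻¹ * Gᵀ, ?_⟩
    have hFG : (Gᵀ * G)⁻¹ * Gᵀ * G = 1 := by
      rw [Matrix.mul_assoc]
      exact Matrix.nonsing_inv_mul _ ((Matrix.isUnit_iff_isUnit_det _).mp hU)
    rw [hFG, sub_self]
    have h0 : specRad (0 : Matrix (Fin q) (Fin q) ℝ) = 0 := by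
      have hm : ((0 : Matrix (Fin q) (Fin q) ℝ).map (algebraMap ℝ ℂ)) = 0 := by
        ext i j; simp
      rw [specRad, hm, spectralRadius]
      refine le_antisymm (iSup₂_le fun k hk => ?_) zero_le
      have hk0 : k = 0 := by
        by_contra hne
        refine (spectrum.mem_iff.mp hk) ?_
        simpa using (isUnit_iff_ne_zero.mpr hne).map
          (algebraMap ℂ (Matrix (Fin q) (Fin q) ℂ))
      simp [hk0]
    rw [h0]
    exact zero_lt_one
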